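/- arXiv:1012.5217 — 4 statements merged into one kernel-verified Lean document; each statement's English description precedes it below -/
import Mathlib

section
/- Let ω ∈ X. If there exist n₀ ≥ 0 and d ≥ 1 such that ω(n+d) = ω(n) for all integers n ≥ n₀, then there exists n₁ such that ω(n) = 0 for all n ≥ n₁. -/
/-- `ω̄(n) = μ(n)` for `n ≥ 1` and `ω̄(n) = 0` for `n ≤ 0`. -/
noncomputable def omegaBar : ℤ → ℝ := fun n =>
  if 0 < n then ((ArithmeticFunction.moebius n.toNat : ℤ) : ℝ) else 0

/-- `X` is the closure (in the product topology) of the two-sided shift orbit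
`{T^j ω̄ : j ∈ ℤ}`, where `(T^j ω̄)(n) = ω̄(n + j)`. -/
noncomputable def Xspace : Set (ℤ → ℝ) :=
  closure {x | ∃ j : ℤ, x = fun n => omegaBar (n + j)}

lemma omegaBar_eq_zero_of_dvd (d N : ℤ) (hd : 1 ≤ d) (hdvd : (d+1)^2 ∣ N) :
    omegaBar N = 0 := by
  unfold omegaBar
  split_ifs with h
  · have hN : ((N.toNat : ℤ)) = N := Int.toNat_of_nonneg h.le
    have he : ((d+1).toNat : ℤ) = d + 1 := Int.toNat_of_nonneg (by linarith)
    have hdvd' : ((d+1).toNat ^ 2 : ℕ) ∣ N.toNat := by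
      rw [← Int.natCast_dvd_natCast]
      push_cast
      rw [he, hN]
      exact hdvd
    have hns : ¬ Squarefree N.toNat := by
      intro hs
      have hu := hs (d+1).toNat (by rwa [← pow_two])
      have h2 : 2 ≤ (d+1).toNat := by omega
      have := Nat.isUnit_iff.mp hu
      omega
    simp [ArithmeticFunction.moebius_eq_zero_of_not_squarefree hns]
  · rfl

lemma exists_hit (a d : ℤ) (hd : 1 ≤ d) :
    ∃ k : ℤ, 0 ≤ k ∧ k < (d+1)^2 ∧ (d+1)^2 ∣ a + k*d := by
  have hqpos : (0:ℤ) < (d+1)^2 := by positivity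
  refine ⟨(a*(d+2)) % ((d+1)^2), Int.emod_nonneg _ hqpos.ne',
    Int.emod_lt_of_pos _ hqpos, ?_⟩
  have h1 : (d+1)^2 ∣ a*(d+2) - (a*(d+2)) % ((d+1)^2) :=
    Int.dvd_self_sub_of_emod_eq rfl
  have h2 : a + ((a*(d+2)) % ((d+1)^2))*d
      = a*(d+1)^2 - (a*(d+2) - (a*(d+2)) % ((d+1)^2))*d := by ring
  rw [h2]
  exact (dvd_mul_left _ a).sub (h1.mul_right d)

/-- **Lemma 2 (forward half).** If `ω ∈ X` is eventually periodic to the right,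
then `ω(n) = 0` for all large `n`. -/
theorem eventually_periodic_right_eventually_zero
    (ω : ℤ → ℝ) (hω : ω ∈ Xspace)
    (n₀ : ℤ) (hn₀ : 0 ≤ n₀) (d : ℤ) (hd : 1 ≤ d)
    (hper : ∀ n : ℤ, n₀ ≤ n → ω (n + d) = ω n) :
    ∃ n₁ : ℤ, ∀ n : ℤ, n₁ ≤ n → ω n = 0 := by
  refine ⟨n₀, fun m hm => ?_⟩
  have hper' : ∀ k : ℕ, ω (m + k*d) = ω m := by
    intro k
    induction k with
    | zero => simp
    | succ k ih =>
      have hk : n₀ ≤ m + (k:ℤ)*d := by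
        have : (0:ℤ) ≤ (k:ℤ)*d := mul_nonneg (by positivity) (by linarith)
        linarith
      have heq : m + (((k+1:ℕ)):ℤ)*d = (m + (k:ℤ)*d) + d := by push_cast; ring
      rw [heq, hper _ hk, ih]
  by_contra hne
  set ε := |ω m| with hε
  have hεpos : 0 < ε := abs_pos.mpr hne
  set F : Finset ℤ := (Finset.range ((d+1)^2).toNat).image (fun k : ℕ => m + (k:ℤ)*d)
    with hF
  set U : Set (ℤ → ℝ) := ⋂ n ∈ F, {x : ℤ → ℝ | dist (x n) (ω n) < ε} with hU
  have hUopen : IsOpen U := by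
    apply isOpen_biInter_finset
    intro n _
    have : {x : ℤ → ℝ | dist (x n) (ω n) < ε}
        = (fun x : ℤ → ℝ => x n) ⁻¹' Metric.ball (ω n) ε := rfl
    rw [this]
    exact (continuous_apply n).isOpen_preimage _ Metric.isOpen_ball
  have hωU : ω ∈ U := by
    rw [hU]
    refine Set.mem_iInter₂.mpr fun n _ => ?_
    simpa using hεpos
  obtain ⟨y, hyU, j, hyj⟩ := mem_closure_iff.mp hω U hUopen hωU
  obtain ⟨k, hk0, hkq, hdvd⟩ := exists_hit (m + j) d hd
  have hkmem : m + k*d ∈ F := by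
    rw [hF]
    refine Finset.mem_image.mpr ⟨k.toNat, Finset.mem_range.mpr (by omega), ?_⟩
    rw [Int.toNat_of_nonneg hk0]
  have hy0 : y (m + k*d) = 0 := by
    rw [hyj]
    apply omegaBar_eq_zero_of_dvd d _ hd
    have : m + k*d + j = (m + j) + k*d := by ring
    rw [this]
    exact hdvd
  have hdist := Set.mem_iInter₂.mp hyU (m + k*d) hkmem
  have hωval : ω (m + k*d) = ω m := by
    have := hper' k.toNat
    rwa [Int.toNat_of_nonneg hk0] at this
  simp only [Set.mem_setOf_eq] at hdist
  rw [hy0, hωval, Real.dist_eq, zero_sub, abs_neg] at hdist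
  exact absurd hdist (lt_irrefl ε)
end

section
/- The Möbius function is not eventually periodic: there do not exist integers n₀ ≥ 1 and d ≥ 1 such that μ(n+d) = μ(n) for all n ≥ n₀. -/
/-- The Möbius function is not eventually periodic: there are no `n₀ ≥ 1` and
`d ≥ 1` such that `μ(n + d) = μ(n)` for all `n ≥ n₀`. -/
theorem moebius_not_eventually_periodic :
    ¬ ∃ (n₀ d : ℕ), 1 ≤ n₀ ∧ 1 ≤ d ∧
      ∀ n : ℕ, n₀ ≤ n →
        ArithmeticFunction.moebius (n + d) = ArithmeticFunction.moebius n := by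
  rintro ⟨n₀, d, hn₀, hd, hper⟩
  -- periodicity for all multiples of d
  have key : ∀ k : ℕ, ∀ n : ℕ, n₀ ≤ n →
      ArithmeticFunction.moebius (n + k * d) = ArithmeticFunction.moebius n := by
    intro k
    induction k with
    | zero => simp
    | succ k ih =>
      intro n hn
      have h1 : n + (k + 1) * d = (n + k * d) + d := by ring
      rw [h1, hper (n + k * d) (le_trans hn (Nat.le_add_right _ _)), ih n hn]
  -- a prime p ≥ n₀
  obtain ⟨p, hpge, hp⟩ := Nat.exists_infinite_primes n₀
  -- a prime q > d
  obtain ⟨q, hqgt, hq⟩ := Nat.exists_infinite_primes (d + 1)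
  have hqd : ¬ q ∣ d := fun h => absurd (Nat.le_of_dvd hd h) (by omega)
  have hcop : Nat.Coprime d (q ^ 2) :=
    Nat.Coprime.pow_right 2 ((Nat.coprime_comm.1 (hq.coprime_iff_not_dvd.2 hqd)))
  -- choose t with q² ∣ 1 + d * t
  haveI : NeZero (q ^ 2) := ⟨pow_ne_zero 2 hq.pos.ne'⟩
  have hunit : IsUnit (d : ZMod (q ^ 2)) := (ZMod.isUnit_iff_coprime d (q ^ 2)).2 hcop
  set t : ℕ := (-(d : ZMod (q ^ 2))⁻¹).val with ht
  have hdvd : (q ^ 2 : ℕ) ∣ 1 + d * t := by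
    have : ((1 + d * t : ℕ) : ZMod (q ^ 2)) = 0 := by
      push_cast [ht, ZMod.natCast_val, ZMod.cast_id]
      have := ZMod.mul_inv_of_unit (d : ZMod (q ^ 2)) hunit
      ring_nf
      ring_nf at this
      rw [this]
      ring
    exact (ZMod.natCast_eq_zero_iff _ _).1 this
  -- contradiction
  have h1 : ArithmeticFunction.moebius (p + (p * t) * d) = ArithmeticFunction.moebius p :=
    key (p * t) p hpge
  have h2 : p + (p * t) * d = p * (1 + d * t) := by ring
  have hnsq : ¬ Squarefree (p * (1 + d * t)) := by
    intro hs
    have : q * q ∣ p * (1 + d * t) := by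
      have : q * q ∣ 1 + d * t := by rwa [← pow_two]
      exact this.mul_left p
    exact hq.one_lt.ne' (Nat.isUnit_iff.1 (hs q this))
  have h3 : ArithmeticFunction.moebius (p * (1 + d * t)) = 0 :=
    ArithmeticFunction.moebius_eq_zero_of_not_squarefree hnsq
  rw [h2, h3, ArithmeticFunction.moebius_apply_prime hp] at h1
  exact absurd h1 (by norm_num)
end

section
/- Let ν be any weak*-limit point of the sequence (ν_N). Then the set {ω ∈ X : there exists k ≥ 1 such that ω(n) = 0 for all n ≥ k, or ω(n) = 0 for all n ≤ −k} has ν-measure zero. -/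
open MeasureTheory Filter Topology

section Sieve
open Finset

lemma count_multiples_window (a L d : ℕ) (hd : 1 ≤ d) :
    (({m ∈ Finset.Icc (a+1) (a+1+L) | d ∣ m}).card : ℝ) ≤ (L : ℝ) / d + 2 := by
  have hsub : ∀ m ∈ {m ∈ Finset.Icc (a+1) (a+1+L) | d ∣ m},
      m / d ∈ Finset.Icc ((a+1)/d) ((a+1+L)/d) := by
    intro m hm
    simp only [mem_filter, mem_Icc] at hm ⊢
    exact ⟨Nat.div_le_div_right hm.1.1, Nat.div_le_div_right hm.1.2⟩
  have hinj : Set.InjOn (· / d) ↑{m ∈ Finset.Icc (a+1) (a+1+L) | d ∣ m} := by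
    intro x hx y hy hxy
    simp only [coe_filter, Set.mem_setOf_eq, mem_Icc] at hx hy
    have hx2 := Nat.div_mul_cancel hx.2
    have hy2 := Nat.div_mul_cancel hy.2
    simp only at hxy
    rw [← hx2, ← hy2, hxy]
  have hcard := Finset.card_le_card_of_injOn _ hsub hinj
  rw [Nat.card_Icc] at hcard
  have hdiv : (a+1+L)/d ≤ (a+1)/d + L/d + 1 := by
    rw [Nat.add_div (by omega)]
    split_ifs <;> omega
  have hmono : (a+1)/d ≤ (a+1+L)/d := Nat.div_le_div_right (by omega)
  have h1 : ({m ∈ Finset.Icc (a+1) (a+1+L) | d ∣ m}).card ≤ L / d + 2 := by omega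
  calc (({m ∈ Finset.Icc (a+1) (a+1+L) | d ∣ m}).card : ℝ) ≤ ((L / d + 2 : ℕ) : ℝ) := by
        exact_mod_cast h1
    _ ≤ (L : ℝ) / d + 2 := by
        push_cast
        have := Nat.cast_div_le (α := ℝ) (m := L) (n := d)
        linarith

lemma sum_inv_sq_of_gt (y : ℕ) (hy : 1 ≤ y) (S : Finset ℕ) (hS : ∀ q ∈ S, y < q) :
    ∑ q ∈ S, ((q : ℝ)^2)⁻¹ ≤ 2 / y := by
  have hsub : S ⊆ Finset.Ioo y (S.sup id + 1) := by
    intro q hq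
    simp only [mem_Ioo]
    exact ⟨hS q hq, Nat.lt_succ_of_le (Finset.le_sup (f := id) hq)⟩
  calc ∑ q ∈ S, ((q : ℝ)^2)⁻¹
      ≤ ∑ q ∈ Finset.Ioo y (S.sup id + 1), ((q : ℝ)^2)⁻¹ := by
        apply Finset.sum_le_sum_of_subset_of_nonneg hsub
        intro i _ _; positivity
    _ ≤ 2 / (y + 1) := sum_Ioo_inv_sq_le y _
    _ ≤ 2 / y := by
        have hy' : (1:ℝ) ≤ y := by exact_mod_cast hy
        apply div_le_div_of_nonneg_left (by norm_num) (by linarith) (by linarith)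

lemma sum_primes_inv_sq (S : Finset ℕ) (hS : ∀ p ∈ S, p.Prime) :
    ∑ p ∈ S, ((p : ℝ)^2)⁻¹ ≤ 7/9 := by
  have hsplit : S = {p ∈ S | p < 5} ∪ {p ∈ S | ¬ p < 5} := (Finset.filter_union_filter_not_eq _ S).symm
  rw [hsplit, Finset.sum_union (Finset.disjoint_filter_filter_not S S _)]
  have h1 : {p ∈ S | p < 5} ⊆ ({2, 3} : Finset ℕ) := by
    intro p hp
    simp only [mem_filter] at hp
    have hpp := hS p hp.1
    have hp5 := hp.2
    have h2 := hpp.two_le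
    interval_cases p
    · simp
    · simp
    · exact absurd hpp (by norm_num)
  have hb1 : ∑ p ∈ {p ∈ S | p < 5}, ((p : ℝ)^2)⁻¹ ≤ ∑ p ∈ ({2,3} : Finset ℕ), ((p : ℝ)^2)⁻¹ := by
    apply Finset.sum_le_sum_of_subset_of_nonneg h1
    intro i _ _; positivity
  have hb2 : ∑ p ∈ {p ∈ S | ¬ p < 5}, ((p : ℝ)^2)⁻¹ ≤ 2/5 := by
    set T := {p ∈ S | ¬ p < 5} with hT
    have hsub : T ⊆ Finset.Ioo 4 (T.sup id + 1) := by
      intro q hq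
      have hq5 : ¬ q < 5 := (Finset.mem_filter.1 hq).2
      exact Finset.mem_Ioo.2 ⟨by omega, Nat.lt_succ_of_le (Finset.le_sup (f := id) hq)⟩
    calc ∑ q ∈ T, ((q : ℝ)^2)⁻¹
        ≤ ∑ q ∈ Finset.Ioo 4 (T.sup id + 1), ((q : ℝ)^2)⁻¹ :=
          Finset.sum_le_sum_of_subset_of_nonneg hsub (by intro i _ _; positivity)
      _ ≤ 2 / (4 + 1) := sum_Ioo_inv_sq_le 4 _
      _ ≤ 2/5 := by norm_num
  have hb1' : ∑ p ∈ ({2,3} : Finset ℕ), ((p : ℝ)^2)⁻¹ ≤ 1/4 + 1/9 := by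
    norm_num
  linarith

/-- Key sieve estimate: starting points of runs of `L+1` consecutive
non-squarefree numbers have small density. -/
lemma natBad_count (ε : ℝ) (hε : 0 < ε) :
    ∃ L : ℕ, 1 ≤ L ∧ ∃ C : ℝ, 0 ≤ C ∧ ∀ N : ℕ, ∀ s : Finset ℕ,
      s ⊆ Finset.range N →
      (∀ j ∈ s, ∀ m ∈ Finset.Icc (j+1) (j+1+L), ¬ Squarefree m) →
      (s.card : ℝ) ≤ ε * N + C := by
  obtain ⟨y, hy1, hyε⟩ : ∃ y : ℕ, 1 ≤ y ∧ 12 / (y:ℝ) ≤ ε := by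
    refine ⟨max 1 ⌈12/ε⌉₊, le_max_left _ _, ?_⟩
    have h1 : (12:ℝ)/ε ≤ (⌈12/ε⌉₊ : ℝ) := Nat.le_ceil _
    have h2 : ((⌈12/ε⌉₊:ℕ):ℝ) ≤ ((max 1 ⌈12/ε⌉₊ : ℕ):ℝ) := by exact_mod_cast le_max_right _ _
    have hypos : (0:ℝ) < ((max 1 ⌈12/ε⌉₊ : ℕ):ℝ) := by
      have : (1:ℕ) ≤ max 1 ⌈12/ε⌉₊ := le_max_left _ _
      exact_mod_cast Nat.lt_of_lt_of_le Nat.zero_lt_one this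
    rw [div_le_iff₀ hypos]
    rw [div_le_iff₀ hε] at h1
    nlinarith
  have hy0 : (0:ℝ) < y := by exact_mod_cast hy1
  refine ⟨100 * y, by omega, 1200, by norm_num, ?_⟩
  intro N s hsub hbad
  set L := 100 * y with hL
  -- small primes and related sets
  set small : Finset ℕ := {p ∈ Finset.range (y+1) | p.Prime} with hsmall
  have hsmall_card : (small.card : ℝ) ≤ y := by
    have : small ⊆ Finset.Icc 2 y := by
      intro p hp
      simp only [hsmall, mem_filter, mem_range] at hp
      exact Finset.mem_Icc.2 ⟨hp.2.two_le, by omega⟩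
    have := Finset.card_le_card this
    rw [Nat.card_Icc] at this
    have : small.card ≤ y := by omega
    exact_mod_cast this
  set G : ℕ → Finset ℕ :=
    fun j => {m ∈ Finset.Icc (j+1) (j+1+L) | ∀ p ∈ small, ¬ p^2 ∣ m} with hG
  set H : ℕ → Finset ℕ :=
    fun j => {m ∈ Finset.Icc (j+1) (j+1+L) | ∃ q ∈ Finset.Icc (y+1) m, q.Prime ∧ q^2 ∣ m} with hH
  -- Step A : lower bound on G j
  have stepA : ∀ j : ℕ, (18 * y : ℝ) ≤ ((G j).card : ℝ) := by
    intro j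
    have hpartition :=
      Finset.card_filter_add_card_filter_not
        (s := Finset.Icc (j+1) (j+1+L)) (p := fun m => ∀ p ∈ small, ¬ p^2 ∣ m)
    have hIccCard : (Finset.Icc (j+1) (j+1+L)).card = L + 1 := by
      rw [Nat.card_Icc]; omega
    set notG := {m ∈ Finset.Icc (j+1) (j+1+L) | ¬ ∀ p ∈ small, ¬ p^2 ∣ m} with hnotG
    have hbiU : notG ⊆ small.biUnion (fun p => {m ∈ Finset.Icc (j+1) (j+1+L) | p^2 ∣ m}) := by
      intro m hm
      simp only [hnotG, mem_filter] at hm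
      push_neg at hm
      obtain ⟨hp, p, hps, hpd⟩ := hm
      exact Finset.mem_biUnion.2 ⟨p, hps, Finset.mem_filter.2 ⟨hp, hpd⟩⟩
    have hnotG_card : ((notG).card : ℝ) ≤ (L:ℝ) * (7/9) + 2 * y := by
      have h1 : notG.card ≤ ∑ p ∈ small, ({m ∈ Finset.Icc (j+1) (j+1+L) | p^2 ∣ m}).card :=
        le_trans (Finset.card_le_card hbiU) (Finset.card_biUnion_le)
      have h2 : ((∑ p ∈ small, ({m ∈ Finset.Icc (j+1) (j+1+L) | p^2 ∣ m}).card : ℕ) : ℝ)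
          ≤ ∑ p ∈ small, ((L:ℝ) / (p^2) + 2) := by
        push_cast
        apply Finset.sum_le_sum
        intro p hp
        have hp2 : 1 ≤ p^2 := by
          have := (Finset.mem_filter.1 hp).2.two_le
          nlinarith
        have := count_multiples_window j L (p^2) hp2
        simpa using this
      have h3 : ∑ p ∈ small, ((L:ℝ) / (p^2) + 2)
          = (L:ℝ) * (∑ p ∈ small, ((p:ℝ)^2)⁻¹) + 2 * small.card := by
        rw [Finset.sum_add_distrib, Finset.sum_const, Finset.mul_sum, nsmul_eq_mul]
        have hcong : ∑ p ∈ small, (L:ℝ) / (p^2) = ∑ p ∈ small, (L:ℝ) * ((p:ℝ)^2)⁻¹ :=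
          Finset.sum_congr rfl (fun p _ => by push_cast; ring)
        rw [hcong]
        ring
      have h4 : ∑ p ∈ small, ((p:ℝ)^2)⁻¹ ≤ 7/9 := by
        apply sum_primes_inv_sq
        intro p hp
        exact (Finset.mem_filter.1 hp).2
      have hL0 : (0:ℝ) ≤ L := by positivity
      calc ((notG).card : ℝ) ≤ ∑ p ∈ small, ((L:ℝ) / (p^2) + 2) := by
            refine le_trans ?_ h2; exact_mod_cast h1
        _ = (L:ℝ) * (∑ p ∈ small, ((p:ℝ)^2)⁻¹) + 2 * small.card := h3
        _ ≤ (L:ℝ) * (7/9) + 2 * y := by nlinarith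
    have hGcard : (G j).card + notG.card = L + 1 := by
      rw [← hIccCard]; exact hpartition
    have hreal : ((G j).card : ℝ) + (notG.card : ℝ) = (L : ℝ) + 1 := by
      exact_mod_cast congrArg (Nat.cast : ℕ → ℝ) hGcard
    have hLy : (L : ℝ) = 100 * (y:ℝ) := by rw [hL]; push_cast; ring
    linarith [hnotG_card, hreal]
  -- Step B : bad j implies G j ⊆ H j
  have stepB : ∀ j ∈ s, G j ⊆ H j := by
    intro j hj m hm
    simp only [hG, mem_filter] at hm
    obtain ⟨hmI, hgood⟩ := hm
    have hnsq : ¬ Squarefree m := hbad j hj m hmI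
    rw [Nat.squarefree_iff_prime_squarefree] at hnsq
    push_neg at hnsq
    obtain ⟨q, hq, hqd⟩ := hnsq
    have hq' : q.Prime := hq
    have hm1 : 1 ≤ m := by
      have := Finset.mem_Icc.1 hmI
      omega
    have hqm : q^2 ≤ m := by
      have hd : q^2 ∣ m := by rwa [sq]
      exact Nat.le_of_dvd (by omega) hd
    have hqy : y < q := by
      by_contra hc
      push_neg at hc
      exact hgood q (Finset.mem_filter.2 ⟨Finset.mem_range.2 (by omega), hq'⟩) (by rwa [sq])
    refine Finset.mem_filter.2 ⟨hmI, q, Finset.mem_Icc.2 ⟨by omega, by nlinarith [hq'.two_le]⟩, hq', by rwa [sq]⟩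
  -- Step C : double counting
  set bigset : Finset ℕ :=
    {m ∈ Finset.Icc 1 (N+L) | ∃ q ∈ Finset.Icc (y+1) m, q.Prime ∧ q^2 ∣ m} with hbigset
  have stepC : ∑ j ∈ Finset.range N, (H j).card ≤ (L + 1) * bigset.card := by
    have hHj : ∀ j ∈ Finset.range N, H j = {m ∈ bigset | m ∈ Finset.Icc (j+1) (j+1+L)} := by
      intro j hj
      have hjN := Finset.mem_range.1 hj
      ext m
      simp only [hH, hbigset, mem_filter, mem_Icc]
      constructor
      · rintro ⟨⟨h1, h2⟩, hq⟩
        exact ⟨⟨⟨by omega, by omega⟩, hq⟩, ⟨h1, h2⟩⟩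
      · rintro ⟨⟨_, hq⟩, h1, h2⟩
        exact ⟨⟨h1, h2⟩, hq⟩
    calc ∑ j ∈ Finset.range N, (H j).card
        = ∑ j ∈ Finset.range N, ∑ m ∈ bigset, (if m ∈ Finset.Icc (j+1) (j+1+L) then 1 else 0) := by
          apply Finset.sum_congr rfl
          intro j hj
          rw [hHj j hj, Finset.card_filter]
      _ = ∑ m ∈ bigset, ∑ j ∈ Finset.range N, (if m ∈ Finset.Icc (j+1) (j+1+L) then 1 else 0) :=
          Finset.sum_comm
      _ ≤ ∑ m ∈ bigset, (L + 1) := by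
          apply Finset.sum_le_sum
          intro m hm
          have hm1 : 1 ≤ m := by
            have := (Finset.mem_filter.1 hm).1
            exact (Finset.mem_Icc.1 this).1
          rw [← Finset.card_filter]
          have hsub2 : {j ∈ Finset.range N | m ∈ Finset.Icc (j+1) (j+1+L)} ⊆
              Finset.Icc (m - 1 - L) (m - 1) := by
            intro j hj
            simp only [mem_filter, mem_range, mem_Icc] at hj
            exact Finset.mem_Icc.2 ⟨by omega, by omega⟩
          calc ({j ∈ Finset.range N | m ∈ Finset.Icc (j+1) (j+1+L)}).card
              ≤ (Finset.Icc (m - 1 - L) (m - 1)).card := Finset.card_le_card hsub2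
            _ ≤ L + 1 := by rw [Nat.card_Icc]; omega
      _ = bigset.card * (L + 1) := by rw [Finset.sum_const, smul_eq_mul]
      _ = (L + 1) * bigset.card := by ring
  -- Step D : bound bigset
  have stepD : (bigset.card : ℝ) ≤ (N + L : ℝ) * (2 / y) := by
    set bigprimes : Finset ℕ := {q ∈ Finset.Icc (y+1) (N+L) | q.Prime} with hbp
    have hbiU : bigset ⊆ bigprimes.biUnion (fun q => {m ∈ Finset.Icc 1 (N+L) | q^2 ∣ m}) := by
      intro m hm
      simp only [hbigset, mem_filter, mem_Icc] at hm
      obtain ⟨⟨hm1, hm2⟩, q, hq, hqp, hqd⟩ := hm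
      have hqI := hq
      refine Finset.mem_biUnion.2 ⟨q, Finset.mem_filter.2 ⟨Finset.mem_Icc.2 ⟨hqI.1, by omega⟩, hqp⟩,
        Finset.mem_filter.2 ⟨Finset.mem_Icc.2 ⟨hm1, hm2⟩, hqd⟩⟩
    have h1 : bigset.card ≤ ∑ q ∈ bigprimes, ({m ∈ Finset.Icc 1 (N+L) | q^2 ∣ m}).card :=
      le_trans (Finset.card_le_card hbiU) Finset.card_biUnion_le
    have h2 : ∀ q ∈ bigprimes, ({m ∈ Finset.Icc 1 (N+L) | q^2 ∣ m}).card = (N+L) / q^2 := by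
      intro q _
      rw [show Finset.Icc 1 (N+L) = Finset.Ioc 0 (N+L) from rfl]
      exact Nat.Ioc_filter_dvd_card_eq_div (N+L) (q^2)
    have h3 : (bigset.card : ℝ) ≤ ∑ q ∈ bigprimes, ((N+L : ℕ) : ℝ) / (q:ℝ)^2 := by
      calc (bigset.card : ℝ) ≤ ((∑ q ∈ bigprimes, ({m ∈ Finset.Icc 1 (N+L) | q^2 ∣ m}).card : ℕ) : ℝ) := by
            exact_mod_cast h1
        _ = ((∑ q ∈ bigprimes, (N+L) / q^2 : ℕ) : ℝ) := by
            congr 1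
            exact Finset.sum_congr rfl h2
        _ ≤ ∑ q ∈ bigprimes, ((N+L : ℕ) : ℝ) / (q:ℝ)^2 := by
            push_cast
            apply Finset.sum_le_sum
            intro q _
            have := Nat.cast_div_le (α := ℝ) (m := N+L) (n := q^2)
            push_cast at this
            exact this
    have h4 : ∑ q ∈ bigprimes, ((N+L : ℕ) : ℝ) / (q:ℝ)^2
        = ((N+L:ℕ) : ℝ) * ∑ q ∈ bigprimes, ((q:ℝ)^2)⁻¹ := by
      rw [Finset.mul_sum]
      apply Finset.sum_congr rfl
      intro q _
      rw [div_eq_mul_inv]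
    have h5 : ∑ q ∈ bigprimes, ((q:ℝ)^2)⁻¹ ≤ 2 / y := by
      apply sum_inv_sq_of_gt y hy1
      intro q hq
      have := (Finset.mem_filter.1 hq).1
      have := Finset.mem_Icc.1 this
      omega
    have hcast : ((N+L:ℕ) : ℝ) = (N:ℝ) + (L:ℝ) := by push_cast; ring
    calc (bigset.card : ℝ) ≤ ((N+L:ℕ):ℝ) * ∑ q ∈ bigprimes, ((q:ℝ)^2)⁻¹ := h3.trans_eq h4
      _ ≤ ((N+L:ℕ):ℝ) * (2 / y) := by
          apply mul_le_mul_of_nonneg_left h5 (by positivity)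
      _ = (N + L : ℝ) * (2 / y) := by rw [hcast]
  -- Step E : combine everything
  have hy1' : (1:ℝ) ≤ (y:ℝ) := by exact_mod_cast hy1
  have hN0 : (0:ℝ) ≤ (N:ℝ) := by positivity
  have hLy : (L : ℝ) = 100 * (y:ℝ) := by rw [hL]; push_cast; ring
  have hEB : ∀ j ∈ s, ((G j).card : ℝ) ≤ ((H j).card : ℝ) := by
    intro j hj
    exact_mod_cast Finset.card_le_card (stepB j hj)
  have hsum1 : (18 * (y:ℝ)) * s.card ≤ ∑ j ∈ s, ((H j).card : ℝ) := by
    calc (18 * (y:ℝ)) * s.card = ∑ j ∈ s, (18 * (y:ℝ)) := by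
          rw [Finset.sum_const, nsmul_eq_mul]; ring
      _ ≤ ∑ j ∈ s, ((G j).card : ℝ) := Finset.sum_le_sum (fun j _ => stepA j)
      _ ≤ ∑ j ∈ s, ((H j).card : ℝ) := Finset.sum_le_sum hEB
  have hsum2 : ∑ j ∈ s, ((H j).card : ℝ) ≤ ∑ j ∈ Finset.range N, ((H j).card : ℝ) :=
    Finset.sum_le_sum_of_subset_of_nonneg hsub (by intro i _ _; positivity)
  have hsum3 : ∑ j ∈ Finset.range N, ((H j).card : ℝ) ≤ ((L:ℝ) + 1) * bigset.card := by
    have h := (Nat.cast_le (α := ℝ)).2 stepC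
    push_cast at h ⊢
    linarith [h]
  have H1 : (18 * (y:ℝ)) * s.card ≤ ((L:ℝ) + 1) * ((N + L : ℝ) * (2 / y)) := by
    have hb : ((L:ℝ) + 1) * (bigset.card : ℝ) ≤ ((L:ℝ) + 1) * ((N + L : ℝ) * (2 / y)) := by
      apply mul_le_mul_of_nonneg_left stepD (by positivity)
    linarith [hsum1, hsum2, hsum3]
  have H2 : 18 * (y:ℝ) * (y:ℝ) * s.card ≤ ((L:ℝ) + 1) * ((N:ℝ) + L) * 2 := by
    have hmul := mul_le_mul_of_nonneg_right H1 hy0.le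
    calc 18 * (y:ℝ) * (y:ℝ) * s.card = ((18 * (y:ℝ)) * s.card) * y := by ring
      _ ≤ (((L:ℝ) + 1) * ((N + L : ℝ) * (2 / y))) * y := hmul
      _ = ((L:ℝ) + 1) * ((N:ℝ) + L) * 2 := by field_simp
  rw [hLy] at H2
  have hX : (s.card:ℝ) * (18*(y:ℝ)*y) ≤ ((12/(y:ℝ))*N + 1200) * (18*(y:ℝ)*y) := by
    have expand : ((12/(y:ℝ))*N + 1200) * (18*(y:ℝ)*y) = 216*(N:ℝ)*y + 21600*(y:ℝ)*y := by
      field_simp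
      ring
    rw [expand]
    nlinarith [H2, hy1', hN0, mul_nonneg hN0 (by linarith : (0:ℝ) ≤ (y:ℝ) - 1),
      mul_nonneg (by linarith : (0:ℝ) ≤ (y:ℝ)) (by linarith : (0:ℝ) ≤ (y:ℝ) - 1)]
  have hfin : (s.card:ℝ) ≤ (12/(y:ℝ))*N + 1200 :=
    le_of_mul_le_mul_right hX (by positivity)
  have : (12/(y:ℝ))*N ≤ ε * N := mul_le_mul_of_nonneg_right hyε hN0
  linarith

end Sieve

noncomputable def gBump : ℝ → ℝ := fun t => max 0 (1 - |t|)

lemma gBump_cont : Continuous gBump :=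
  continuous_const.max (continuous_const.sub continuous_abs)

lemma gBump_nonneg (t : ℝ) : 0 ≤ gBump t := le_max_left _ _

lemma gBump_le_one (t : ℝ) : gBump t ≤ 1 := by
  apply max_le (by norm_num)
  have := abs_nonneg t
  linarith

lemma gBump_zero : gBump 0 = 1 := by simp [gBump]

lemma gBump_of_abs_one {t : ℝ} (h : |t| = 1) : gBump t = 0 := by
  simp [gBump, h]

noncomputable def testF (s : Finset ℤ) : BoundedContinuousFunction (ℤ → ℝ) ℝ :=
  BoundedContinuousFunction.mkOfBound
    ⟨fun ω => ∏ n ∈ s, gBump (ω n),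
      continuous_finset_prod s (fun n _ => gBump_cont.comp (continuous_apply n))⟩
    1
    (by
      intro x y
      have hx : (∏ n ∈ s, gBump (x n)) ∈ Set.Icc (0:ℝ) 1 :=
        ⟨Finset.prod_nonneg (fun n _ => gBump_nonneg _),
         Finset.prod_le_one (fun n _ => gBump_nonneg _) (fun n _ => gBump_le_one _)⟩
      have hy : (∏ n ∈ s, gBump (y n)) ∈ Set.Icc (0:ℝ) 1 :=
        ⟨Finset.prod_nonneg (fun n _ => gBump_nonneg _),
         Finset.prod_le_one (fun n _ => gBump_nonneg _) (fun n _ => gBump_le_one _)⟩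
      simpa using Real.dist_le_of_mem_Icc hx hy)

lemma testF_apply (s : Finset ℤ) (ω : ℤ → ℝ) : testF s ω = ∏ n ∈ s, gBump (ω n) := rfl

lemma testF_nonneg (s : Finset ℤ) (ω : ℤ → ℝ) : 0 ≤ testF s ω :=
  Finset.prod_nonneg (fun n _ => gBump_nonneg _)

lemma omegaBar_eq_zero_iff (m : ℤ) : omegaBar m = 0 ↔ ¬ Squarefree m.toNat := by
  unfold omegaBar
  split_ifs with h
  · rw [show (((ArithmeticFunction.moebius m.toNat : ℤ) : ℝ) = 0) ↔
        (ArithmeticFunction.moebius m.toNat = 0) by exact_mod_cast Iff.rfl]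
    constructor
    · intro h0 hsq
      exact (ArithmeticFunction.moebius_ne_zero_iff_squarefree.2 hsq) h0
    · intro hnsq
      by_contra h0
      exact hnsq (ArithmeticFunction.moebius_ne_zero_iff_squarefree.1 h0)
  · have : m.toNat = 0 := Int.toNat_of_nonpos (le_of_not_gt h)
    simp [this, not_squarefree_zero]

lemma gBump_omegaBar (m : ℤ) :
    gBump (omegaBar m) = if omegaBar m = 0 then 1 else 0 := by
  split_ifs with h
  · rw [h, gBump_zero]
  · apply gBump_of_abs_one
    have hpos : 0 < m := by
      by_contra hc
      exact h (by simp [omegaBar, hc])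
    have hmu : ArithmeticFunction.moebius m.toNat ≠ 0 := by
      intro hc
      exact h (by simp [omegaBar, hpos, hc])
    rcases ArithmeticFunction.moebius_ne_zero_iff_eq_or.1 hmu with h1 | h1 <;>
      simp [omegaBar, hpos, h1]

lemma testF_orbit (s : Finset ℤ) (j : ℤ) :
    testF s (fun n => omegaBar (n + j)) =
      if (∀ n ∈ s, omegaBar (n + j) = 0) then 1 else 0 := by
  rw [testF_apply]
  split_ifs with h
  · apply Finset.prod_eq_one
    intro n hn
    rw [h n hn, gBump_zero]
  · push_neg at h
    obtain ⟨n, hn, hne⟩ := h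
    apply Finset.prod_eq_zero hn
    rw [gBump_omegaBar, if_neg hne]

lemma nu_V_toReal_le
    (ν : Measure (ℤ → ℝ)) (hprob : IsProbabilityMeasure ν)
    (Nk : ℕ → ℕ) (hmono : StrictMono Nk) (hpos : ∀ k, 1 ≤ Nk k)
    (hlim : ∀ f : BoundedContinuousFunction (ℤ → ℝ) ℝ,
      Tendsto
        (fun k => (Nk k : ℝ)⁻¹ *
          ∑ j ∈ Finset.range (Nk k), f (fun n => omegaBar (n + j)))
        atTop (𝓝 (∫ x, f x ∂ν)))
    (s : Finset ℤ) (ε C : ℝ) (hC : 0 ≤ C)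
    (hcount : ∀ N : ℕ,
      (∑ j ∈ Finset.range N, (testF s) (fun n => omegaBar (n + (j:ℕ)))) ≤ ε * N + C) :
    (ν {ω : ℤ → ℝ | ∀ n ∈ s, ω n = 0}).toReal ≤ ε := by
  set V : Set (ℤ → ℝ) := {ω | ∀ n ∈ s, ω n = 0} with hV
  have hVmeas : MeasurableSet V := by
    have : V = ⋂ n ∈ (s : Set ℤ), (fun ω : ℤ → ℝ => ω n) ⁻¹' {0} := by
      ext ω; simp [hV]
    rw [this]
    exact MeasurableSet.biInter s.countable_toSet
      (fun n _ => (measurable_pi_apply n) (measurableSet_singleton 0))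
  have hle : ∀ ω, V.indicator (fun _ => (1:ℝ)) ω ≤ testF s ω := by
    intro ω
    by_cases hω : ω ∈ V
    · rw [Set.indicator_of_mem hω]
      have : testF s ω = 1 := by
        rw [testF_apply]
        apply Finset.prod_eq_one
        intro n hn
        rw [hω n hn, gBump_zero]
      rw [this]
    · rw [Set.indicator_of_notMem hω]
      exact testF_nonneg s ω
  have hint_f : Integrable (⇑(testF s)) ν := (testF s).integrable ν
  have hint_i : Integrable (V.indicator fun _ => (1:ℝ)) ν :=
    (integrable_const (1:ℝ)).indicator hVmeas
  have key : (ν V).toReal ≤ ∫ ω, testF s ω ∂ν := by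
    calc (ν V).toReal = ∫ ω, V.indicator (fun _ => (1:ℝ)) ω ∂ν := by
          rw [integral_indicator_const (1:ℝ) hVmeas, smul_eq_mul, mul_one]; rfl
      _ ≤ ∫ ω, testF s ω ∂ν := integral_mono hint_i hint_f hle
  have havg : ∀ k, (Nk k : ℝ)⁻¹ *
      (∑ j ∈ Finset.range (Nk k), (testF s) (fun n => omegaBar (n + j))) ≤ ε + C / Nk k := by
    intro k
    have h1 : (0:ℝ) < Nk k := by exact_mod_cast hpos k
    have h2 := hcount (Nk k)
    calc (Nk k : ℝ)⁻¹ * (∑ j ∈ Finset.range (Nk k), (testF s) (fun n => omegaBar (n + j)))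
        ≤ (Nk k : ℝ)⁻¹ * (ε * Nk k + C) := by
          apply mul_le_mul_of_nonneg_left h2 (by positivity)
      _ = ε + C / Nk k := by field_simp
  have hNtend : Tendsto (fun k => (Nk k : ℝ)) atTop atTop :=
    tendsto_natCast_atTop_atTop.comp hmono.tendsto_atTop
  have htend0 : Tendsto (fun k => C / (Nk k : ℝ)) atTop (𝓝 0) :=
    Tendsto.div_atTop tendsto_const_nhds hNtend
  have htend2 : Tendsto (fun k => ε + C / (Nk k : ℝ)) atTop (𝓝 ε) := by
    have h := (tendsto_const_nhds : Tendsto (fun _ : ℕ => ε) atTop (𝓝 ε)).add htend0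
    simpa using h
  have hint_le : ∫ ω, testF s ω ∂ν ≤ ε :=
    le_of_tendsto_of_tendsto' (hlim (testF s)) htend2 havg
  linarith

lemma hcount_right (ε C : ℝ) (L : ℕ)
    (hnat : ∀ N : ℕ, ∀ s : Finset ℕ, s ⊆ Finset.range N →
      (∀ j ∈ s, ∀ m ∈ Finset.Icc (j+1) (j+1+L), ¬ Squarefree m) →
      (s.card : ℝ) ≤ ε * N + C)
    (hε : 0 ≤ ε) (k : ℤ) (hk : 1 ≤ k) :
    ∀ N : ℕ, (∑ j ∈ Finset.range N,
        (testF (Finset.Icc k (k+L))) (fun n => omegaBar (n + (j:ℕ)))) ≤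
      ε * N + (ε * k.toNat + C) := by
  classical
  intro N
  set P : ℕ → Prop := fun j => ∀ n ∈ Finset.Icc k (k+(L:ℤ)), omegaBar (n + (j:ℤ)) = 0 with hP
  have hsum : (∑ j ∈ Finset.range N,
      (testF (Finset.Icc k (k+L))) (fun n => omegaBar (n + (j:ℕ)))) =
      (((Finset.range N).filter P).card : ℝ) := by
    rw [← Finset.sum_boole]
    apply Finset.sum_congr rfl
    intro j _
    rw [testF_orbit]
  rw [hsum]
  have hktoNat : ((k.toNat : ℤ)) = k := Int.toNat_of_nonneg (by omega)
  have hk1 : 1 ≤ k.toNat := by omega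
  set c : ℕ := k.toNat - 1 with hc
  set s' : Finset ℕ := ((Finset.range N).filter P).image (fun j => c + j) with hs'
  have hinj : Function.Injective (fun j : ℕ => c + j) := by
    intro a b h
    simpa using h
  have hcard : s'.card = ((Finset.range N).filter P).card :=
    Finset.card_image_of_injective _ hinj
  have hsub : s' ⊆ Finset.range (N + k.toNat) := by
    intro j' hj'
    obtain ⟨j, hj, rfl⟩ := Finset.mem_image.1 hj'
    have := Finset.mem_range.1 (Finset.mem_filter.1 hj).1
    simp only [Finset.mem_range]
    omega
  have hbad : ∀ j' ∈ s', ∀ m ∈ Finset.Icc (j'+1) (j'+1+L), ¬ Squarefree m := by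
    intro j' hj' m hm
    obtain ⟨j, hj, rfl⟩ := Finset.mem_image.1 hj'
    have hPj : P j := (Finset.mem_filter.1 hj).2
    have hmI := Finset.mem_Icc.1 hm
    have hn : ((m:ℤ) - j) ∈ Finset.Icc k (k+(L:ℤ)) := by
      rw [Finset.mem_Icc]
      constructor <;> [skip; skip] <;> push_cast <;> omega
    have := hPj _ hn
    rw [sub_add_cancel] at this
    rw [omegaBar_eq_zero_iff] at this
    rwa [Int.toNat_natCast] at this
  have := hnat (N + k.toNat) s' hsub hbad
  rw [hcard] at this
  calc (((Finset.range N).filter P).card : ℝ) ≤ ε * (N + k.toNat) + C := by exact_mod_cast this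
    _ = ε * N + (ε * k.toNat + C) := by push_cast; ring

lemma hcount_left (ε C : ℝ) (L : ℕ)
    (hnat : ∀ N : ℕ, ∀ s : Finset ℕ, s ⊆ Finset.range N →
      (∀ j ∈ s, ∀ m ∈ Finset.Icc (j+1) (j+1+L), ¬ Squarefree m) →
      (s.card : ℝ) ≤ ε * N + C)
    (hε : 0 ≤ ε) (k : ℤ) (hk : 1 ≤ k) :
    ∀ N : ℕ, (∑ j ∈ Finset.range N,
        (testF (Finset.Icc (-k-L) (-k))) (fun n => omegaBar (n + (j:ℕ)))) ≤
      ε * N + (C + (k.toNat + L + 1)) := by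
  classical
  intro N
  set P : ℕ → Prop := fun j => ∀ n ∈ Finset.Icc (-k-(L:ℤ)) (-k), omegaBar (n + (j:ℤ)) = 0 with hP
  have hsum : (∑ j ∈ Finset.range N,
      (testF (Finset.Icc (-k-L) (-k))) (fun n => omegaBar (n + (j:ℕ)))) =
      (((Finset.range N).filter P).card : ℝ) := by
    rw [← Finset.sum_boole]
    apply Finset.sum_congr rfl
    intro j _
    rw [testF_orbit]
  rw [hsum]
  have hktoNat : ((k.toNat : ℤ)) = k := Int.toNat_of_nonneg (by omega)
  set T : ℕ := k.toNat + L + 1 with hT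
  set B := (Finset.range N).filter P with hB
  have hsplit : B.card ≤ (B.filter (fun j => j < T)).card + (B.filter (fun j => ¬ j < T)).card := by
    rw [Finset.card_filter_add_card_filter_not]
  have hsmallpart : (B.filter (fun j => j < T)).card ≤ T := by
    have : B.filter (fun j => j < T) ⊆ Finset.range T := by
      intro j hj
      exact Finset.mem_range.2 (Finset.mem_filter.1 hj).2
    simpa using Finset.card_le_card this
  -- the large part maps into natBad starts
  set s' : Finset ℕ := (B.filter (fun j => ¬ j < T)).image (fun j => j - T) with hs'
  have hinj : Set.InjOn (fun j => j - T) ↑(B.filter (fun j => ¬ j < T)) := by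
    intro a ha b hb hab
    have ha' := (Finset.mem_filter.1 ha).2
    have hb' := (Finset.mem_filter.1 hb).2
    simp only at hab
    omega
  have hcard : s'.card = (B.filter (fun j => ¬ j < T)).card :=
    Finset.card_image_of_injOn hinj
  have hsub : s' ⊆ Finset.range N := by
    intro i hi
    obtain ⟨j, hj, rfl⟩ := Finset.mem_image.1 hi
    have := Finset.mem_range.1 (Finset.mem_filter.1 ((Finset.mem_filter.1 hj).1)).1
    simp only [Finset.mem_range]
    omega
  have hbad : ∀ i ∈ s', ∀ m ∈ Finset.Icc (i+1) (i+1+L), ¬ Squarefree m := by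
    intro i hi m hm
    obtain ⟨j, hj, rfl⟩ := Finset.mem_image.1 hi
    have hjT : ¬ j < T := (Finset.mem_filter.1 hj).2
    have hPj : P j := (Finset.mem_filter.1 ((Finset.mem_filter.1 hj).1)).2
    have hmI := Finset.mem_Icc.1 hm
    have hn : ((m:ℤ) - j) ∈ Finset.Icc (-k-(L:ℤ)) (-k) := by
      rw [Finset.mem_Icc]
      constructor <;> push_cast <;> omega
    have := hPj _ hn
    rw [sub_add_cancel] at this
    rw [omegaBar_eq_zero_iff] at this
    rwa [Int.toNat_natCast] at this
  have hn := hnat N s' hsub hbad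
  rw [hcard] at hn
  have hfin : (B.card : ℝ) ≤ (ε * N + C) + T := by
    have h1 : ((B.filter (fun j => ¬ j < T)).card : ℝ) ≤ ε * N + C := by exact_mod_cast hn
    have h2 : ((B.filter (fun j => j < T)).card : ℝ) ≤ (T:ℕ) := by exact_mod_cast hsmallpart
    have h3 : (B.card : ℝ) ≤ ((B.filter (fun j => j < T)).card : ℝ) +
        ((B.filter (fun j => ¬ j < T)).card : ℝ) := by exact_mod_cast hsplit
    linarith
  calc (B.card : ℝ) ≤ (ε * N + C) + T := hfin
    _ = ε * N + (C + (k.toNat + L + 1)) := by rw [hT]; push_cast; ring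


lemma measure_eq_zero_of_toReal (ν : Measure (ℤ → ℝ)) [IsProbabilityMeasure ν]
    (A : Set (ℤ → ℝ)) (h : ∀ ε : ℝ, 0 < ε → (ν A).toReal ≤ ε) : ν A = 0 := by
  have h0 : (ν A).toReal ≤ 0 :=
    le_of_forall_pos_le_add (fun ε hε => by simpa using h ε hε)
  have h1 : (ν A).toReal = 0 := le_antisymm h0 ENNReal.toReal_nonneg
  rcases (ENNReal.toReal_eq_zero_iff _).1 h1 with h2 | h2
  · exact h2
  · exact absurd h2 (measure_ne_top ν A)

/-- **(2.5).** For any weak*-limit point `ν` of `ν_N = (1/N) ∑_{j<N} δ_{T^j ω̄}`,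
the set of `ω ∈ X` that vanish eventually to the right or eventually to the
left has `ν`-measure zero. -/
theorem eventually_zero_set_null
    (ν : Measure (ℤ → ℝ)) (hprob : IsProbabilityMeasure ν)
    (Nk : ℕ → ℕ) (hmono : StrictMono Nk) (hpos : ∀ k, 1 ≤ Nk k)
    (hlim : ∀ f : BoundedContinuousFunction (ℤ → ℝ) ℝ,
      Tendsto
        (fun k => (Nk k : ℝ)⁻¹ *
          ∑ j ∈ Finset.range (Nk k), f (fun n => omegaBar (n + j)))
        atTop (𝓝 (∫ x, f x ∂ν))) :
    ν {ω : ℤ → ℝ | ω ∈ Xspace ∧ ∃ k : ℤ, 1 ≤ k ∧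
        ((∀ n : ℤ, k ≤ n → ω n = 0) ∨ (∀ n : ℤ, n ≤ -k → ω n = 0))} = 0 := by
  -- the right- and left- vanishing sets
  set R : ℤ → Set (ℤ → ℝ) := fun k => {ω | ∀ n : ℤ, k ≤ n → ω n = 0} with hR
  set Lset : ℤ → Set (ℤ → ℝ) := fun k => {ω | ∀ n : ℤ, n ≤ -k → ω n = 0} with hLs
  have hRnull : ∀ k : ℤ, 1 ≤ k → ν (R k) = 0 := by
    intro k hk
    apply measure_eq_zero_of_toReal
    intro ε hε
    obtain ⟨L, hL1, C, hC0, hnat⟩ := natBad_count ε hε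
    have hcount := hcount_right ε C L hnat hε.le k hk
    have hkey := nu_V_toReal_le ν hprob Nk hmono hpos hlim (Finset.Icc k (k+L))
      ε (ε * k.toNat + C) (by positivity) hcount
    have hsub : R k ⊆ {ω : ℤ → ℝ | ∀ n ∈ Finset.Icc k (k+(L:ℤ)), ω n = 0} := by
      intro ω hω n hn
      exact hω n (Finset.mem_Icc.1 hn).1
    exact le_trans (ENNReal.toReal_mono
      (measure_ne_top ν _) (measure_mono hsub)) hkey
  have hLnull : ∀ k : ℤ, 1 ≤ k → ν (Lset k) = 0 := by
    intro k hk
    apply measure_eq_zero_of_toReal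
    intro ε hε
    obtain ⟨L, hL1, C, hC0, hnat⟩ := natBad_count ε hε
    have hcount := hcount_left ε C L hnat hε.le k hk
    have hkey := nu_V_toReal_le ν hprob Nk hmono hpos hlim (Finset.Icc (-k-L) (-k))
      ε (C + (k.toNat + L + 1)) (by positivity) hcount
    have hsub : Lset k ⊆ {ω : ℤ → ℝ | ∀ n ∈ Finset.Icc (-k-(L:ℤ)) (-k), ω n = 0} := by
      intro ω hω n hn
      exact hω n (Finset.mem_Icc.1 hn).2
    exact le_trans (ENNReal.toReal_mono
      (measure_ne_top ν _) (measure_mono hsub)) hkey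
  have hcover : {ω : ℤ → ℝ | ω ∈ Xspace ∧ ∃ k : ℤ, 1 ≤ k ∧
      ((∀ n : ℤ, k ≤ n → ω n = 0) ∨ (∀ n : ℤ, n ≤ -k → ω n = 0))} ⊆
      ⋃ (j : ℕ), (R ((j:ℤ)+1) ∪ Lset ((j:ℤ)+1)) := by
    rintro ω ⟨-, k, hk, hcase⟩
    refine Set.mem_iUnion.2 ⟨(k-1).toNat, ?_⟩
    have hkk : (((k-1).toNat : ℤ) + 1) = k := by omega
    rcases hcase with h | h
    · left
      intro n hn
      exact h n (by omega)
    · right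
      intro n hn
      exact h n (by omega)
  have hzero : ∀ j : ℕ, ν (R ((j:ℤ)+1) ∪ Lset ((j:ℤ)+1)) = 0 := by
    intro j
    exact measure_union_null (hRnull _ (by omega)) (hLnull _ (by omega))
  have := measure_mono (μ := ν) hcover
  have h2 := (measure_iUnion_le (μ := ν) (fun j : ℕ => R ((j:ℤ)+1) ∪ Lset ((j:ℤ)+1)))
  simp only [hzero, tsum_zero] at h2
  exact le_antisymm (le_trans this h2) zero_le
end

section
/- Let V : ℕ → ℝ, E ∈ ℝ, and let ψ : ℕ → ℝ satisfy ψ(0) = 0 and ψ(n+1) + ψ(n−1) + V(n)ψ(n) = E ψ(n) for all n ≥ 1. Let ℓ ≥ 1 and suppose the ℓ×ℓ Jacobi matrix H_ℓ with diagonal entries V(1),…,V(ℓ) and entries 1 on the off-diagonals satisfies that H_ℓ − E is invertible. Then for every 1 ≤ x ≤ ℓ, ψ(x) = −ψ(ℓ+1)·((H_ℓ − E)⁻¹)(x,ℓ); in particular |ψ(x)| ≤ |ψ(ℓ+1)|·|((H_ℓ − E)⁻¹)(x,ℓ)|. -/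
open Matrix


/-- The `ℓ × ℓ` Jacobi matrix with diagonal `V(1), …, V(ℓ)` (index `i : Fin ℓ`
corresponds to `k = i + 1`) and ones on the off-diagonals. -/
noncomputable def Hjac (V : ℕ → ℝ) (ℓ : ℕ) : Matrix (Fin ℓ) (Fin ℓ) ℝ :=
  fun i j =>
    if i = j then V (i + 1)
    else if (i : ℤ) - (j : ℤ) = 1 ∨ (j : ℤ) - (i : ℤ) = 1 then 1 else 0

lemma sum_ite_nat (ℓ m : ℕ) (c : ℝ) :
    ∑ j : Fin ℓ, (if (j : ℕ) = m then c else 0) = if m < ℓ then c else 0 := by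
  rcases lt_or_ge m ℓ with h | h
  · rw [if_pos h]
    have he : ∀ j : Fin ℓ, (if (j : ℕ) = m then c else 0)
        = (if j = (⟨m, h⟩ : Fin ℓ) then c else 0) := by
      intro j; simp [Fin.ext_iff]
    rw [Finset.sum_congr rfl fun j _ => he j, Finset.sum_ite_eq' Finset.univ]
    simp
  · rw [if_neg (not_lt.2 h)]
    refine Finset.sum_eq_zero fun j _ => ?_
    rw [if_neg]
    have := j.isLt
    omega

/-- **(3.16)–(3.17).** If `ψ(0) = 0` and `ψ(n+1) + ψ(n-1) + V(n)ψ(n) = Eψ(n)` for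
all `n ≥ 1`, and `H_ℓ - E` is invertible, then for `1 ≤ x ≤ ℓ` one has
`ψ(x) = -ψ(ℓ+1) · (H_ℓ - E)⁻¹(x, ℓ)`, so `|ψ(x)| ≤ |ψ(ℓ+1)| · |(H_ℓ - E)⁻¹(x, ℓ)|`. -/
theorem solution_green_bound
    (V : ℕ → ℝ) (E : ℝ) (ψ : ℕ → ℝ)
    (h0 : ψ 0 = 0)
    (heq : ∀ n : ℕ, 1 ≤ n → ψ (n + 1) + ψ (n - 1) + V n * ψ n = E * ψ n)
    (ℓ : ℕ) (hℓ : 1 ≤ ℓ)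
    (hinv : IsUnit (Hjac V ℓ - E • (1 : Matrix (Fin ℓ) (Fin ℓ) ℝ))) :
    ∀ x : Fin ℓ,
      ψ (x + 1) =
        -ψ (ℓ + 1) *
          ((Hjac V ℓ - E • (1 : Matrix (Fin ℓ) (Fin ℓ) ℝ))⁻¹ x ⟨ℓ - 1, by omega⟩) ∧
      |ψ (x + 1)| ≤
        |ψ (ℓ + 1)| *
          |(Hjac V ℓ - E • (1 : Matrix (Fin ℓ) (Fin ℓ) ℝ))⁻¹ x ⟨ℓ - 1, by omega⟩| := by
  set A := Hjac V ℓ - E • (1 : Matrix (Fin ℓ) (Fin ℓ) ℝ) with hA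
  set u : Fin ℓ → ℝ := fun i => ψ (i + 1) with hu
  have key : A *ᵥ u = fun i : Fin ℓ => if (i : ℕ) = ℓ - 1 then -ψ (ℓ + 1) else 0 := by
    funext i
    have hrow : ∀ j : Fin ℓ, A i j * u j =
        (if (j : ℕ) = (i : ℕ) then (V (i + 1) - E) * ψ (i + 1) else 0) +
        ((if (j : ℕ) = (i : ℕ) - 1 then ψ i else 0) +
        (if (j : ℕ) = (i : ℕ) + 1 then ψ (i + 2) else 0)) := by
      intro j
      have hi := i.isLt
      have hj := j.isLt
      simp only [hA, Hjac, Matrix.sub_apply, Matrix.smul_apply, Matrix.one_apply,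
        smul_eq_mul, hu, Fin.ext_iff]
      split_ifs <;>
        first
          | omega
          | ring1
          | (rw [show (1 : ℕ) + (j : ℕ) = (i : ℕ) from by omega]; ring1)
          | (rw [show (1 : ℕ) + (j : ℕ) = 2 + (i : ℕ) from by omega]; ring1)
          | (rw [show (j : ℕ) + 1 = (i : ℕ) from by omega]; ring1)
          | (rw [show (j : ℕ) + 1 = (i : ℕ) + 2 from by omega]; ring1)
          | (rw [show (j : ℕ) = (i : ℕ) from by omega,
              show (i : ℕ) = 0 from by omega, h0]; ring1)
          | (rw [show (j : ℕ) = (i : ℕ) from by omega]; ring1)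
    have hmv : (A *ᵥ u) i = ∑ j : Fin ℓ, A i j * u j := rfl
    rw [hmv, Finset.sum_congr rfl fun j _ => hrow j, Finset.sum_add_distrib,
      Finset.sum_add_distrib, sum_ite_nat, sum_ite_nat, sum_ite_nat,
      if_pos i.isLt, if_pos (by omega : (i : ℕ) - 1 < ℓ)]
    have hi := i.isLt
    have hrec := heq ((i : ℕ) + 1) (by omega)
    simp only [Nat.add_sub_cancel] at hrec
    rw [show (i : ℕ) + 1 + 1 = (i : ℕ) + 2 from by omega] at hrec
    rcases lt_or_ge ((i : ℕ) + 1) ℓ with h | h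
    · rw [if_pos h, if_neg (by omega : ¬ (i : ℕ) = ℓ - 1)]
      linarith
    · rw [if_neg (not_lt.2 h), if_pos (by omega : (i : ℕ) = ℓ - 1),
        show ℓ + 1 = (i : ℕ) + 2 from by omega]
      linarith
  have hdet : IsUnit A.det := (Matrix.isUnit_iff_isUnit_det A).mp hinv
  have hAinv : A⁻¹ * A = 1 := Matrix.nonsing_inv_mul A hdet
  intro x
  have hux : u x = (A⁻¹ *ᵥ (A *ᵥ u)) x := by
    rw [Matrix.mulVec_mulVec, hAinv, Matrix.one_mulVec]
  rw [key] at hux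
  have hsum : (A⁻¹ *ᵥ fun i => if (i : ℕ) = ℓ - 1 then -ψ (ℓ + 1) else 0) x
      = -ψ (ℓ + 1) * A⁻¹ x ⟨ℓ - 1, by omega⟩ := by
    have : ∀ j : Fin ℓ, A⁻¹ x j * (if (j : ℕ) = ℓ - 1 then -ψ (ℓ + 1) else 0)
        = if j = (⟨ℓ - 1, by omega⟩ : Fin ℓ) then A⁻¹ x j * (-ψ (ℓ + 1)) else 0 := by
      intro j
      simp only [Fin.ext_iff]
      split_ifs <;> simp
    show ∑ j : Fin ℓ, A⁻¹ x j * _ = _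
    rw [Finset.sum_congr rfl fun j _ => this j, Finset.sum_ite_eq' Finset.univ]
    simp [mul_comm]
  rw [hsum] at hux
  have heqx : ψ ((x : ℕ) + 1) = -ψ (ℓ + 1) * A⁻¹ x ⟨ℓ - 1, by omega⟩ := hux
  refine ⟨heqx, ?_⟩
  rw [heqx, abs_mul, abs_neg]
end
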